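/- arXiv:nlin/0307020 — 2 statements merged into one kernel-verified Lean document; each statement's English description precedes it below -/
import Mathlib

section
/- Assume D > 1. For every n with 3 ≤ n ≤ D+1, φⁿ(c_D) = (F⁻¹ γ c₂ u₂ ⋯ c_{n-2} u_{n-2}) · (c_{n-1} u_{n-1}⁻¹ c_{n-1}⁻¹) · (u_{n-2}⁻¹ c_{n-2}⁻¹ ⋯ u₂⁻¹ c₂⁻¹ γ⁻¹ F), where γ = u₀ c₁ u₁ (for n = 3 the first factor is F⁻¹ γ and the last is γ⁻¹ F). -/
abbrev G : Type := FreeGroup (ℤ ⊕ ℤ)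

/-- generator cₙ -/
def c (n : ℤ) : G := FreeGroup.of (Sum.inl n)
/-- generator uₙ -/
def u (n : ℤ) : G := FreeGroup.of (Sum.inr n)

/-- F = c₁ c₂ ⋯ c_D -/
def F (D : ℕ) : G := ((List.range D).map (fun i => c ((i : ℤ) + 1))).prod

/-- the tangle endomorphism for minimum delay time D -/
def φ (D : ℕ) : G →* G := FreeGroup.lift fun x =>
  match x with
  | Sum.inl n => if n = (D : ℤ) then (F D)⁻¹ * (u 0)⁻¹ * F D else c (n + 1)
  | Sum.inr n => u (n + 1)

lemma map_coe {α : Type*} (f : ℤ → α) (l : List ℕ) :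
    (List.map f ((l : List ℕ) : List ℤ)) = l.map (fun a : ℕ => f (a : ℤ)) := by
  induction l with
  | nil => rfl
  | cons a l ih =>
    simp only [List.map_cons, ← ih]
    rfl

lemma F_def (D : ℕ) :
    F D = ((List.range D).map (fun i : ℕ => c ((i : ℤ) + 1))).prod := by
  rw [F, map_coe]

lemma phi_u (D : ℕ) (m : ℤ) : φ D (u m) = u (m + 1) := by
  simp [φ, u, FreeGroup.lift_apply_of]

lemma phi_c (D : ℕ) (m : ℤ) (h : m ≠ (D : ℤ)) : φ D (c m) = c (m + 1) := by
  simp [φ, c, FreeGroup.lift_apply_of, h]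

lemma phi_cD (D : ℕ) : φ D (c D) = (F D)⁻¹ * (u 0)⁻¹ * F D := by
  simp [φ, c, FreeGroup.lift_apply_of]

lemma iter_u (D : ℕ) (k : ℕ) (m : ℤ) : (⇑(φ D))^[k] (u m) = u (m + k) := by
  induction k with
  | zero => simp
  | succ k ih =>
    rw [Function.iterate_succ_apply', ih, phi_u]
    congr 1
    push_cast
    ring

lemma phi_F (D : ℕ) (hD : 1 ≤ D) : φ D (F D) = (c 1)⁻¹ * (u 0)⁻¹ * F D := by
  obtain ⟨D', rfl⟩ : ∃ D', D = D' + 1 := ⟨D - 1, (Nat.succ_pred_eq_of_pos hD).symm⟩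
  have hF : F (D' + 1)
      = c 1 * ((List.range D').map (fun i : ℕ => c ((i : ℤ) + 2))).prod := by
    rw [F_def, List.range_succ_eq_map, List.map_cons, List.prod_cons, List.map_map,
      show c (((0:ℕ):ℤ) + 1) = c 1 by norm_num]
    congr 2
  have hFs : F (D' + 1)
      = ((List.range D').map (fun i : ℕ => c ((i : ℤ) + 1))).prod * c ((D' : ℤ) + 1) := by
    rw [F_def, List.range_succ, List.map_append, List.prod_append]
    simp
  have h1 : φ (D' + 1) (((List.range D').map (fun i : ℕ => c ((i : ℤ) + 1))).prod)
      = ((List.range D').map (fun i : ℕ => c ((i : ℤ) + 2))).prod := by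
    rw [map_list_prod, List.map_map]
    congr 1
    apply List.map_congr_left
    intro i hi
    simp only [Function.comp_apply]
    rw [phi_c]
    · congr 1 <;> omega
    · have : i < D' := List.mem_range.mp hi
      omega
  have h2 : φ (D' + 1) (c ((D' : ℤ) + 1)) = (F (D' + 1))⁻¹ * (u 0)⁻¹ * F (D' + 1) := by
    have := phi_cD (D' + 1)
    rwa [show ((D' + 1 : ℕ) : ℤ) = (D' : ℤ) + 1 by push_cast; ring] at this
  have key : φ (D' + 1) (F (D' + 1)) =
      ((List.range D').map (fun i : ℕ => c ((i : ℤ) + 2))).prod *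
        ((F (D' + 1))⁻¹ * (u 0)⁻¹ * F (D' + 1)) := by
    nth_rewrite 1 [hFs]
    rw [map_mul, h1, h2]
  rw [key, hF]
  group

/-- W k = u₀ c₁ u₁ c₂ ⋯ u_{k-1} c_k -/
def W (k : ℕ) : G := ((List.range k).map (fun i : ℕ => u (i : ℤ) * c ((i : ℤ) + 1))).prod

lemma W_succ (k : ℕ) : W (k + 1) = W k * (u (k : ℤ) * c ((k : ℤ) + 1)) := by
  rw [W, List.range_succ, List.map_append, List.prod_append, ← W]
  simp

lemma iter_F (D : ℕ) (hD : 1 ≤ D) : ∀ k, 1 ≤ k → k ≤ D →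
    (⇑(φ D))^[k] (F D) = (W k)⁻¹ * F D := by
  intro k
  induction k with
  | zero => omega
  | succ k ih =>
    intro _ hk2
    rcases Nat.eq_zero_or_pos k with rfl | hk
    · rw [Function.iterate_one, phi_F D hD, W_succ, W]
      simp [mul_assoc]
    · rw [Function.iterate_succ_apply', ih hk (by omega), map_mul, map_inv,
        phi_F D hD]
      have hW : φ D (W k) = ((List.range k).map
          (fun i : ℕ => u ((i : ℤ) + 1) * c ((i : ℤ) + 2))).prod := by
        rw [W, map_list_prod, List.map_map]
        congr 1
        apply List.map_congr_left
        intro i hi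
        simp only [Function.comp_apply, map_mul]
        rw [phi_u, phi_c]
        · congr 2 <;> omega
        · have : i < k := List.mem_range.mp hi
          omega
      have hWs : W (k + 1) = (u 0 * c 1) * ((List.range k).map
          (fun i : ℕ => u ((i : ℤ) + 1) * c ((i : ℤ) + 2))).prod := by
        rw [W, List.range_succ_eq_map, List.map_cons, List.prod_cons, List.map_map,
          show u ((0:ℕ):ℤ) * c (((0:ℕ):ℤ) + 1) = u 0 * c 1 by norm_num]
        congr 2
      rw [hW, hWs]
      group

/-- V k = c₁ u₁ c₂ u₂ ⋯ c_k u_k -/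
def V (k : ℕ) : G := ((List.range k).map (fun i : ℕ => c ((i : ℤ) + 1) * u ((i : ℤ) + 1))).prod

lemma V_succ (k : ℕ) : V (k + 1) = V k * (c ((k : ℤ) + 1) * u ((k : ℤ) + 1)) := by
  rw [V, List.range_succ, List.map_append, List.prod_append, ← V]
  simp

lemma W_eq (k : ℕ) : W (k + 1) = u 0 * V k * c ((k : ℤ) + 1) := by
  induction k with
  | zero =>
    rw [W_succ, W, V]
    simp
  | succ k ih =>
    rw [W_succ, ih, V_succ]
    push_cast
    simp [mul_assoc]

lemma gammaQ (m : ℕ) : u 0 * c 1 * u 1 *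
    ((List.range m).map (fun i : ℕ => c ((i : ℤ) + 2) * u ((i : ℤ) + 2))).prod
    = u 0 * V (m + 1) := by
  induction m with
  | zero =>
    rw [V_succ, V]
    simp [mul_assoc]
  | succ m ih =>
    rw [List.range_succ, List.map_append, List.prod_append, ← mul_assoc, ih, V_succ (m + 1),
      show ((m + 1 : ℕ) : ℤ) + 1 = (m : ℤ) + 2 by push_cast; ring, V_succ,
      show ((m : ℤ) + 1) = ((m + 1 : ℕ) : ℤ) by push_cast; ring]
    simp [mul_assoc]

theorem stmt_5 (D : ℕ) (hD : 1 < D) (n : ℕ) (hn1 : 3 ≤ n) (hn2 : n ≤ D + 1) :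
    let γ : G := u 0 * c 1 * u 1
    let Q : G := ((List.range (n - 3)).map (fun i => c ((i : ℤ) + 2) * u ((i : ℤ) + 2))).prod
    (⇑(φ D))^[n] (c D) =
      ((F D)⁻¹ * γ * Q) *
      (c ((n : ℤ) - 1) * (u ((n : ℤ) - 1))⁻¹ * (c ((n : ℤ) - 1))⁻¹) *
      (Q⁻¹ * γ⁻¹ * F D) := by
  intro γ Q
  have hQ : Q = ((List.range (n - 3)).map
      (fun i : ℕ => c ((i : ℤ) + 2) * u ((i : ℤ) + 2))).prod := by
    show (List.map _ _).prod = _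
    rw [map_coe]
  obtain ⟨k, rfl⟩ : ∃ k, n = k + 1 := ⟨n - 1, by omega⟩
  rw [Function.iterate_succ_apply, phi_cD,
    iterate_map_mul, iterate_map_mul, iterate_map_inv, iterate_map_inv,
    iter_u, iter_F D (by omega) k (by omega) (by omega)]
  have hW : W k = γ * Q * c ((k : ℤ)) := by
    obtain ⟨m, rfl⟩ : ∃ m, k = m + 1 := ⟨k - 1, by omega⟩
    have hgq : γ * Q = u 0 * V m := by
      have h := gammaQ (m - 1)
      rw [show m - 1 + 1 = m by omega] at h
      rw [hQ, show (m + 1 + 1 - 3) = m - 1 by omega]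
      exact h
    rw [W_eq, ← hgq]
    have : ((m : ℤ) + 1) = ((m + 1 : ℕ) : ℤ) := by push_cast; ring
    rw [this]
  rw [hW]
  have e1 : ((k + 1 : ℕ) : ℤ) - 1 = (k : ℤ) := by push_cast; ring
  have e2 : (0 : ℤ) + (k : ℕ) = (k : ℤ) := by push_cast; ring
  rw [e1, e2]
  group
end

section
/- For D = 1 and every n ≥ 1, the number of occurrences of the letters u₀ and u₀⁻¹ in the reduced word of φⁿ(c₁) equals 2^{n-1}. -/
/-- explicit reduced word of φⁿ(c₁) -/
def Lw : ℕ → List ((ℤ ⊕ ℤ) × Bool)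
  | 0 => [(Sum.inl 1, true)]
  | n + 1 => FreeGroup.invRev (Lw n) ++ (Sum.inr (n : ℤ), false) :: Lw n

/-- no-cancellation relation -/
def R (a b : (ℤ ⊕ ℤ) × Bool) : Prop := ¬(a.1 = b.1 ∧ a.2 = !b.2)

lemma reduce_eq_self_of_chain' (L : List ((ℤ ⊕ ℤ) × Bool)) (h : L.Chain' R) :
    FreeGroup.reduce L = L := by
  induction L with
  | nil => rfl
  | cons x L ih =>
    rw [FreeGroup.reduce.cons, ih h.tail]
    cases L with
    | nil => rfl
    | cons y t =>
      have hxy : R x y := (List.isChain_cons_cons.mp h).1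
      simp only [R] at hxy
      simp [hxy]

lemma chain'_invRev {L : List ((ℤ ⊕ ℤ) × Bool)} (h : L.Chain' R) :
    (FreeGroup.invRev L).Chain' R := by
  show List.IsChain R _
  rw [FreeGroup.invRev, List.isChain_reverse, List.isChain_map]
  refine h.imp ?_
  rintro ⟨a, b⟩ ⟨a', b'⟩ hr
  simp only [R, flip] at hr ⊢
  rintro ⟨h1, h2⟩
  refine hr ⟨h1.symm, ?_⟩
  revert h2
  cases b <;> cases b' <;> decide

lemma Lw_facts (n : ℕ) : (Lw n).Chain' R ∧
    (Lw n).head? = some (Sum.inl 1, decide (n = 0)) ∧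
    (Lw n).getLast? = some (Sum.inl 1, true) := by
  induction n with
  | zero => exact ⟨List.isChain_singleton _, rfl, rfl⟩
  | succ n ih =>
    obtain ⟨hc, hh, hl⟩ := ih
    have hne : Lw n ≠ [] := by intro h; rw [h] at hh; simp at hh
    have hinvlast : (FreeGroup.invRev (Lw n)).getLast? =
        some (Sum.inl 1, !decide (n = 0)) := by
      rw [FreeGroup.invRev, List.getLast?_reverse, List.head?_map, hh]
      rfl
    have hinvhead : (FreeGroup.invRev (Lw n)).head? = some (Sum.inl 1, false) := by
      rw [FreeGroup.invRev, List.head?_reverse, List.getLast?_map, hl]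
      rfl
    refine ⟨?_, ?_, ?_⟩
    · show List.IsChain R _
      rw [Lw, List.isChain_append]
      refine ⟨chain'_invRev hc, ?_, ?_⟩
      · rw [List.isChain_cons]
        refine ⟨?_, hc⟩
        intro y hy
        rw [hh] at hy
        simp at hy
        subst hy
        simp [R]
      · intro x hx y hy
        rw [hinvlast] at hx
        simp at hx hy
        subst hx; subst hy
        simp [R]
    · rw [Lw, List.head?_append, hinvhead]
      have : FreeGroup.invRev (Lw n) ≠ [] := by
        intro h; rw [h] at hinvhead; simp at hinvhead
      simp [hinvhead]
    · have h2 : ((Sum.inr (n : ℤ), false) :: Lw n).getLast? = some (Sum.inl 1, true) := by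
        rw [List.getLast?_cons, hl]; rfl
      rw [Lw, List.getLast?_append, h2]; rfl

lemma key (n : ℕ) :
    (⇑(φ 1))^[n + 1] (c 1) =
      ((⇑(φ 1))^[n] (c 1))⁻¹ * (u n)⁻¹ * ((⇑(φ 1))^[n] (c 1)) := by
  induction n with
  | zero =>
    simp only [Function.iterate_one, Function.iterate_zero, id_eq, Nat.cast_zero]
    have hF : F 1 = c ((0 : ℤ) + 1) * 1 := rfl
    have hF1 : F 1 = c 1 := by rw [hF, mul_one]; norm_num
    show φ 1 (c 1) = _
    rw [c, φ, FreeGroup.lift_apply_of]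
    simp [hF1, c]
  | succ n ih =>
    have hu : (φ 1) (u (n : ℤ)) = u ((n + 1 : ℕ) : ℤ) := by
      rw [u, φ, FreeGroup.lift_apply_of]
      norm_num [u]
    have hw : (φ 1) ((⇑(φ 1))^[n] (c 1)) =
        ((⇑(φ 1))^[n] (c 1))⁻¹ * (u (n : ℤ))⁻¹ * (⇑(φ 1))^[n] (c 1) := by
      rw [← ih]; exact (Function.iterate_succ_apply' (⇑(φ 1)) n (c 1)).symm
    have e : (⇑(φ 1))^[n + 1 + 1] (c 1) = (φ 1) ((⇑(φ 1))^[n + 1] (c 1)) :=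
      Function.iterate_succ_apply' _ _ _
    rw [e, ih, map_mul, map_mul, map_inv, map_inv, hu, hw]


lemma hmk (n : ℕ) : (⇑(φ 1))^[n] (c 1) = FreeGroup.mk (Lw n) := by
  induction n with
  | zero => rfl
  | succ n ih =>
    rw [key n, ih, Lw]
    rw [FreeGroup.inv_mk]
    have : (u (n : ℤ))⁻¹ = FreeGroup.mk [(Sum.inr (n : ℤ), false)] := rfl
    rw [this, FreeGroup.mul_mk, FreeGroup.mul_mk]
    simp

lemma cnt_succ (n : ℕ) :
    ((Lw (n + 1)).countP (fun l => l.1 = Sum.inr 0)) =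
      2 * ((Lw n).countP (fun l => l.1 = Sum.inr 0)) + (if n = 0 then 1 else 0) := by
  rw [Lw, List.countP_append, List.countP_cons]
  rw [FreeGroup.invRev, List.countP_reverse, List.countP_map]
  have : ((fun l : (ℤ ⊕ ℤ) × Bool => decide (l.1 = Sum.inr 0)) ∘
      (fun g : (ℤ ⊕ ℤ) × Bool => (g.1, !g.2))) =
      (fun l : (ℤ ⊕ ℤ) × Bool => decide (l.1 = Sum.inr 0)) := by
    funext l; rfl
  rw [this]
  have h2 : (decide ((Sum.inr (n : ℤ) : ℤ ⊕ ℤ) = Sum.inr 0) : Bool) =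
      decide (n = 0) := by
    simp
  by_cases hn : n = 0 <;> simp [hn] <;> ring

theorem stmt_9 (n : ℕ) (hn : 1 ≤ n) :
    (((⇑(φ 1))^[n] (c 1)).toWord.countP (fun l => l.1 = Sum.inr 0)) = 2 ^ (n - 1) := by
  rw [hmk, FreeGroup.toWord_mk, reduce_eq_self_of_chain' _ (Lw_facts n).1]
  induction n with
  | zero => omega
  | succ n ih =>
    rw [cnt_succ]
    rcases Nat.eq_zero_or_pos n with h0 | hpos
    · subst h0; rfl
    · rw [ih hpos]
      have : n ≠ 0 := hpos.ne'
      simp [this]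
      rw [← pow_succ']
      congr 1
      omega
end
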